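/- With η = ω = (1, -1), the space Z = { p ∈ ℂ[x] : deg p ≤ 2, p'(1) = p(1), p'(-1) = -p(-1) } has dimension 2 (so it is degenerate: its dimension exceeds k + 1 - s = 1). -/

import Mathlib

open Polynomial

noncomputable def Zspace {s : ℕ} (η ω : Fin s → ℂ) (k : ℕ) :
    Submodule ℂ (Polynomial ℂ) where
  carrier := {p | p.degree ≤ (k : ℕ) ∧
    ∀ i, (derivative p).eval (ω i) = η i * p.eval (ω i)}
  add_mem' := by
    rintro a b ⟨ha1, ha2⟩ ⟨hb1, hb2⟩
    refine ⟨le_trans (degree_add_le a b) (max_le ha1 hb1), fun i => ?_⟩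
    simp [ha2 i, hb2 i, mul_add]
  zero_mem' := by simp
  smul_mem' := by
    rintro c a ⟨ha1, ha2⟩
    refine ⟨le_trans (degree_smul_le c a) ha1, fun i => ?_⟩
    simp [ha2 i]
    ring

set_option maxHeartbeats 1000000 in
lemma zspace_eq : Zspace (![1, -1] : Fin 2 → ℂ) (![1, -1] : Fin 2 → ℂ) 2 =
    Submodule.span ℂ {Polynomial.X, 1 + Polynomial.X ^ 2} := by
  apply le_antisymm
  · rintro p ⟨h1, h2⟩
    have hd : p.natDegree ≤ 2 := natDegree_le_iff_degree_le.mpr h1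
    set a := p.coeff 0 with ha
    set b := p.coeff 1 with hb
    set c := p.coeff 2 with hc
    have hp : p = C a + C b * X + C c * X ^ 2 := by
      ext n
      rcases n with _ | _ | _ | n
      · simp [ha]
      · simp [hb]
      · simp [hc, coeff_X_pow]
      · have : p.coeff (n + 3) = 0 := coeff_eq_zero_of_natDegree_lt (by omega)
        simp [this, coeff_X_pow]
    have e0 := h2 0
    rw [hp] at e0
    simp at e0
    have hca : c = a := by linear_combination e0
    rw [Submodule.mem_span_pair]
    refine ⟨b, a, ?_⟩
    rw [hp, hca]
    simp [smul_eq_C_mul]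
    ring
  · rw [Submodule.span_le]
    rintro p (rfl | rfl)
    · refine ⟨by simpa using degree_X_le_iff.mpr (by norm_num), fun i => ?_⟩
      fin_cases i <;> simp
    · constructor
      · refine le_trans (degree_add_le _ _) (max_le ?_ ?_)
        · exact le_trans degree_one_le (by norm_num)
        · simp [degree_X_pow]
      · intro i; fin_cases i <;> simp <;> ring

set_option maxHeartbeats 1000000 in
theorem stmt15 :
    Module.finrank ℂ (Zspace (![1, -1] : Fin 2 → ℂ) (![1, -1] : Fin 2 → ℂ) 2) = 2 := by
  rw [zspace_eq]
  have hli : LinearIndependent ℂ (![Polynomial.X, 1 + Polynomial.X ^ 2] : Fin 2 → Polynomial ℂ) := by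
    rw [LinearIndependent.pair_iff]
    intro s t h
    have h0 : (s • (X : ℂ[X]) + t • (1 + X ^ 2)).coeff 0 = 0 := by rw [h]; simp
    have h1 : (s • (X : ℂ[X]) + t • (1 + X ^ 2)).coeff 1 = 0 := by rw [h]; simp
    simp [coeff_smul, coeff_X_pow, coeff_one] at h0 h1
    exact ⟨h1, h0⟩
  have : ({Polynomial.X, 1 + Polynomial.X ^ 2} : Set (Polynomial ℂ)) = Set.range ![Polynomial.X, 1 + Polynomial.X ^ 2] := by
    simp [Set.range]
    ext q
    constructor
    · rintro (rfl | rfl)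
      exacts [Or.inl rfl, Or.inr rfl]
    · rintro (rfl | rfl) <;> simp
  rw [this, finrank_span_eq_card hli]
  simp
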